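/- Let P : C^op → InfSL be an elementary existential doctrine, R ∈ P(X×Y) a map in Bicat_P, and h : X → Y a morphism of C. Then ⊤_{P(X)} ≤ P_{⟨id_X, h⟩}(R) if and only if R = P_{h × id_Y}(δ_Y). Consequently, P satisfies the Rule of Unique Choice (every map in Bicat_P admits such an h) if and only if the graph functor Γ_P : C → Map(Bicat_P) is full. -/

import Mathlib

open CategoryTheory CategoryTheory.Limits

universe v u w

/-- An elementary existential doctrine on a cartesian category `C`:
a contravariant functor into inf-semilattices with top, equipped with equality
predicates `δ`, and left adjoints to reindexing along both product projections,
satisfying Beck–Chevalley, Frobenius reciprocity and the elementarity condition. -/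
structure EED (C : Type u) [Category.{v} C] [HasFiniteProducts C] where
  obj : C → Type w
  semi : ∀ A : C, SemilatticeInf (obj A)
  otop : ∀ A : C, OrderTop (obj A)
  map : ∀ {A B : C}, (A ⟶ B) → obj B → obj A
  map_id : ∀ (A : C) (α : obj A), map (𝟙 A) α = α
  map_comp : ∀ {A B D : C} (f : A ⟶ B) (g : B ⟶ D) (α : obj D),
    map (f ≫ g) α = map f (map g α)
  map_inf : ∀ {A B : C} (f : A ⟶ B) (α β : obj B), map f (α ⊓ β) = map f α ⊓ map f β
  map_top : ∀ {A B : C} (f : A ⟶ B), map f (⊤ : obj B) = (⊤ : obj A)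
  /-- the equality predicate -/
  δ : ∀ A : C, obj (A ⨯ A)
  /-- existential quantification along the first projection (quantifying away the
  second factor) -/
  exFst : ∀ {X A : C}, obj (X ⨯ A) → obj X
  exFst_adj : ∀ {X A : C} (β : obj (X ⨯ A)) (α : obj X),
    exFst β ≤ α ↔ β ≤ map prod.fst α
  /-- existential quantification along the second projection -/
  exSnd : ∀ {X A : C}, obj (X ⨯ A) → obj A
  exSnd_adj : ∀ {X A : C} (β : obj (X ⨯ A)) (α : obj A),
    exSnd β ≤ α ↔ β ≤ map prod.snd α
  bcFst : ∀ {X X' A : C} (f : X' ⟶ X) (β : obj (X ⨯ A)),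
    exFst (map (prod.map f (𝟙 A)) β) = map f (exFst β)
  bcSnd : ∀ {X A A' : C} (f : A' ⟶ A) (β : obj (X ⨯ A)),
    exSnd (map (prod.map (𝟙 X) f) β) = map f (exSnd β)
  frobFst : ∀ {X A : C} (α : obj X) (β : obj (X ⨯ A)),
    exFst (map prod.fst α ⊓ β) = α ⊓ exFst β
  frobSnd : ∀ {X A : C} (α : obj A) (β : obj (X ⨯ A)),
    exSnd (map prod.snd α ⊓ β) = α ⊓ exSnd β
  /-- elementarity: `α ↦ P_{⟨π₁,π₂⟩}(α) ⊓ P_{⟨π₂,π₃⟩}(δ_A)` is left adjoint to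
  reindexing along `id_X × Δ_A`. -/
  elem : ∀ {X A : C} (α : obj (X ⨯ A)) (γ : obj (X ⨯ (A ⨯ A))),
    (map (prod.map (𝟙 X) prod.fst) α ⊓ map prod.snd (δ A) ≤ γ) ↔
      α ≤ map (prod.map (𝟙 X) (diag A)) γ

attribute [instance] EED.semi EED.otop

variable {C : Type u} [Category.{v} C] [HasFiniteProducts C]

namespace EED

/-- Composition in the bicategory of relations `Bicat_P`: realised using the
ambient object `(X ⨯ Z) ⨯ Y` and existential quantification of the middle factor. -/
noncomputable def rcomp (P : EED C) {X Y Z : C} (R : P.obj (X ⨯ Y)) (S : P.obj (Y ⨯ Z)) :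
    P.obj (X ⨯ Z) :=
  P.exFst (P.map (prod.lift (prod.fst ≫ prod.fst) prod.snd) R ⊓
    P.map (prod.lift prod.snd (prod.fst ≫ prod.snd)) S)

/-- The graph of a morphism of the base category. -/
noncomputable def graph (P : EED C) {X Y : C} (f : X ⟶ Y) : P.obj (X ⨯ Y) :=
  P.map (prod.map f (𝟙 Y)) (P.δ Y)

/-- Tensor product of relations in `Bicat_P`. -/
noncomputable def rtensor (P : EED C) {X Y X' Y' : C} (R : P.obj (X ⨯ Y)) (S : P.obj (X' ⨯ Y')) :
    P.obj ((X ⨯ X') ⨯ (Y ⨯ Y')) :=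
  P.map (prod.map prod.fst prod.fst) R ⊓ P.map (prod.map prod.snd prod.snd) S

end EED

/-- A relation `R ∈ P(X ⨯ Y)` is a map of `Bicat_P` when it is total and
single-valued in the internal sense. -/
def EED.IsMapRel (P : EED C) {X Y : C} (R : P.obj (X ⨯ Y)) : Prop :=
  P.exFst R = (⊤ : P.obj X) ∧
  P.map (prod.map (𝟙 X) prod.fst : X ⨯ (Y ⨯ Y) ⟶ X ⨯ Y) R ⊓
    P.map (prod.lift prod.fst (prod.snd ≫ prod.snd) : X ⨯ (Y ⨯ Y) ⟶ X ⨯ Y) R ≤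
  P.map (prod.snd : X ⨯ (Y ⨯ Y) ⟶ Y ⨯ Y) (P.δ Y)

namespace EED

variable (P : EED C)

lemma map_mono {A B : C} (f : A ⟶ B) {α β : P.obj B} (h : α ≤ β) :
    P.map f α ≤ P.map f β := by
  have h1 : α ⊓ β = α := inf_eq_left.mpr h
  have h2 := P.map_inf f α β
  rw [h1] at h2
  rw [h2]; exact inf_le_right

lemma top_le_map {A B : C} (f : A ⟶ B) {β : P.obj B} (h : (⊤ : P.obj B) ≤ β) :
    (⊤ : P.obj A) ≤ P.map f β := by
  rw [← P.map_top f]; exact P.map_mono f h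

lemma top_le_diag (Y : C) : (⊤ : P.obj Y) ≤ P.map (diag Y) (P.δ Y) := by
  have h1 : P.map (prod.map (𝟙 Y) prod.fst) (⊤ : P.obj (Y ⨯ Y)) ⊓
      P.map prod.snd (P.δ Y) ≤ P.map prod.snd (P.δ Y) := inf_le_right
  have h2 := (P.elem (⊤ : P.obj (Y ⨯ Y)) (P.map prod.snd (P.δ Y))).mp h1
  have h3 := P.map_mono (prod.lift (𝟙 Y) (𝟙 Y)) h2
  rw [P.map_top] at h3
  rw [← P.map_comp, ← P.map_comp] at h3
  have e : (prod.lift (𝟙 Y) (𝟙 Y) ≫ prod.map (𝟙 Y) (diag Y)) ≫ prod.snd = diag Y := by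
    simp [prod.lift_fst, prod.lift_snd, prod.lift_fst_assoc, prod.lift_snd_assoc]
  rw [e] at h3
  exact h3

/-- Substitution into equality ("counit" of elementarity). -/
lemma subst (X Y : C) (γ : P.obj (X ⨯ Y)) :
    P.map (prod.map (𝟙 X) prod.fst) γ ⊓ P.map prod.snd (P.δ Y) ≤
      P.map (prod.map (𝟙 X) prod.snd) γ := by
  apply (P.elem γ (P.map (prod.map (𝟙 X) prod.snd) γ)).mpr
  rw [← P.map_comp]
  have e : prod.map (𝟙 X) (diag Y) ≫ prod.map (𝟙 X) prod.snd = 𝟙 (X ⨯ Y) := by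
    ext <;> simp [prod.lift_fst, prod.lift_snd, prod.lift_fst_assoc, prod.lift_snd_assoc]
  rw [e, P.map_id]

/-- If `⊤ ≤ P_{⟨id,f⟩}(γ)` then the graph of `f` is below `γ`. -/
lemma graph_le {X Y : C} (f : X ⟶ Y) (γ : P.obj (X ⨯ Y))
    (h : (⊤ : P.obj X) ≤ P.map (prod.lift (𝟙 X) f) γ) : P.graph f ≤ γ := by
  have h1 := P.map_mono (prod.lift prod.fst (prod.lift (prod.fst ≫ f) prod.snd))
    (P.subst X Y γ)
  rw [P.map_inf, ← P.map_comp, ← P.map_comp, ← P.map_comp] at h1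
  have e1 : (prod.lift prod.fst (prod.lift (prod.fst ≫ f) prod.snd) : X ⨯ Y ⟶ X ⨯ (Y ⨯ Y)) ≫
      prod.map (𝟙 X) prod.fst = prod.fst ≫ prod.lift (𝟙 X) f := by
    ext <;> simp [prod.lift_fst, prod.lift_snd, prod.lift_fst_assoc, prod.lift_snd_assoc]
  have e2 : prod.lift prod.fst (prod.lift (prod.fst ≫ f) prod.snd) ≫
      (prod.snd : X ⨯ (Y ⨯ Y) ⟶ Y ⨯ Y) = prod.map f (𝟙 Y) := by
    ext <;> simp [prod.lift_fst, prod.lift_snd, prod.lift_fst_assoc, prod.lift_snd_assoc]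
  have e3 : prod.lift prod.fst (prod.lift (prod.fst ≫ f) prod.snd) ≫
      prod.map (𝟙 X) prod.snd = 𝟙 (X ⨯ Y) := by
    ext <;> simp [prod.lift_fst, prod.lift_snd, prod.lift_fst_assoc, prod.lift_snd_assoc]
  rw [e1, e2, e3, P.map_id] at h1
  have h2 : (⊤ : P.obj (X ⨯ Y)) ≤ P.map (prod.fst ≫ prod.lift (𝟙 X) f) γ := by
    rw [P.map_comp]; exact P.top_le_map _ h
  exact le_trans (le_inf (le_trans le_top h2) le_rfl) h1

end EED

/-- For a map `R` of `Bicat_P` and `h : X ⟶ Y` in `C`, `⊤ ≤ P_{⟨id,h⟩}(R)` iff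
`R` is the graph of `h`.  Consequently, `P` satisfies the Rule of Unique Choice
iff the graph functor `Γ_P : C → Map(Bicat_P)` is full. -/
theorem ruc_iff_graph_full (P : EED C) :
    (∀ (X Y : C) (R : P.obj (X ⨯ Y)), P.IsMapRel R → ∀ h : X ⟶ Y,
      ((⊤ : P.obj X) ≤ P.map (prod.lift (𝟙 X) h) R ↔ R = P.graph h)) ∧
    ((∀ (X Y : C) (R : P.obj (X ⨯ Y)), P.IsMapRel R →
        ∃ h : X ⟶ Y, (⊤ : P.obj X) ≤ P.map (prod.lift (𝟙 X) h) R) ↔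
     (∀ (X Y : C) (R : P.obj (X ⨯ Y)), P.IsMapRel R →
        ∃ h : X ⟶ Y, R = P.graph h)) := by
  have main : ∀ (X Y : C) (R : P.obj (X ⨯ Y)), P.IsMapRel R → ∀ h : X ⟶ Y,
      ((⊤ : P.obj X) ≤ P.map (prod.lift (𝟙 X) h) R ↔ R = P.graph h) := by
    intro X Y R hR h
    constructor
    · intro htop
      refine le_antisymm ?_ (P.graph_le h R htop)
      -- use single-valuedness reindexed along ⟨π₁, ⟨π₁ ≫ h, π₂⟩⟩
      have h1 := P.map_mono (prod.lift prod.fst (prod.lift (prod.fst ≫ h) prod.snd))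
        hR.2
      rw [P.map_inf, ← P.map_comp, ← P.map_comp, ← P.map_comp] at h1
      have e1 : (prod.lift prod.fst (prod.lift (prod.fst ≫ h) prod.snd) : X ⨯ Y ⟶ X ⨯ (Y ⨯ Y)) ≫
          prod.map (𝟙 X) prod.fst = prod.fst ≫ prod.lift (𝟙 X) h := by
        ext <;> simp [prod.lift_fst, prod.lift_snd, prod.lift_fst_assoc, prod.lift_snd_assoc]
      have e2 : prod.lift prod.fst (prod.lift (prod.fst ≫ h) prod.snd) ≫
          prod.lift prod.fst (prod.snd ≫ prod.snd) = 𝟙 (X ⨯ Y) := by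
        ext <;> simp [prod.lift_fst, prod.lift_snd, prod.lift_fst_assoc, prod.lift_snd_assoc]
      have e3 : prod.lift prod.fst (prod.lift (prod.fst ≫ h) prod.snd) ≫
          (prod.snd : X ⨯ (Y ⨯ Y) ⟶ Y ⨯ Y) = prod.map h (𝟙 Y) := by
        ext <;> simp [prod.lift_fst, prod.lift_snd, prod.lift_fst_assoc, prod.lift_snd_assoc]
      rw [e1, e2, e3, P.map_id] at h1
      have h2 : (⊤ : P.obj (X ⨯ Y)) ≤ P.map (prod.fst ≫ prod.lift (𝟙 X) h) R := by
        rw [P.map_comp]; exact P.top_le_map _ htop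
      exact le_trans (le_inf (le_trans le_top h2) le_rfl) h1
    · rintro rfl
      unfold EED.graph
      rw [← P.map_comp]
      have e : prod.lift (𝟙 X) h ≫ prod.map h (𝟙 Y) = h ≫ diag Y := by
        ext <;> simp [prod.lift_fst, prod.lift_snd, prod.lift_fst_assoc, prod.lift_snd_assoc]
      rw [e, P.map_comp]
      exact P.top_le_map _ (P.top_le_diag Y)
  refine ⟨main, ?_⟩
  constructor
  · intro H X Y R hR
    obtain ⟨h, hh⟩ := H X Y R hR
    exact ⟨h, (main X Y R hR h).mp hh⟩
  · intro H X Y R hR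
    obtain ⟨h, hh⟩ := H X Y R hR
    exact ⟨h, (main X Y R hR h).mpr hh⟩
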